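/- Let (ψ,φ) be a reproducing pair of weakly measurable functions X → H. Then every bounded linear functional F on V_φ(X,μ) can be represented as F([ξ]_φ) = ∫_X ξ(x) conj(η(x)) dμ(x) for all [ξ]_φ ∈ V_φ(X,μ), with some η ∈ 𝒱_ψ(X,μ), and the residue class [η]_ψ ∈ V_ψ(X,μ) is uniquely determined by F. -/

import Mathlib

open MeasureTheory Filter Topology
open scoped Classical ENNReal NNReal

noncomputable section

variable {H : Type*} [NormedAddCommGroup H] [InnerProductSpace ℂ H] [CompleteSpace H]
  [TopologicalSpace.SeparableSpace H]
variable {X : Type*} [TopologicalSpace X] [LocallyCompactSpace X] [MeasurableSpace X]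
  [BorelSpace X]

/-- Notation for the Mathlib inner product (conjugate-linear in the first slot);
the paper's inner product `⟨f, g⟩` (linear in the first slot) is `⟪g, f⟫`. -/
local notation "⟪" x ", " y "⟫" => @inner ℂ _ _ x y

/-- `φ : X → H` is weakly measurable: `x ↦ ⟨f, φ x⟩` is measurable for every `f ∈ H`. -/
def WeaklyMeasurable (φ : X → H) : Prop :=
  ∀ f : H, Measurable fun x => ⟪φ x, f⟫

/-- `ξ ∈ 𝒱_φ(X,μ)`: `ξ` is measurable, the integral `∫ ξ(x) ⟨φ(x), g⟩ dμ(x)` exists for all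
`g ∈ H`, and it defines a bounded conjugate-linear functional of `g`. -/
def MemV (μ : Measure X) (φ : X → H) (ξ : X → ℂ) : Prop :=
  Measurable ξ ∧ (∀ g : H, Integrable (fun x => ξ x * ⟪g, φ x⟫) μ) ∧
    ∃ c : ℝ, ∀ g : H, ‖∫ x, ξ x * ⟪g, φ x⟫ ∂μ‖ ≤ c * ‖g‖

/-- The map `T_φ : 𝒱_φ(X,μ) → H`, determined weakly by
`⟨T_φ ξ, g⟩ = ∫ ξ(x) ⟨φ(x), g⟩ dμ(x)` for all `g ∈ H` (junk value `0` off `𝒱_φ`). -/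
def Tmap (μ : Measure X) (φ : X → H) (ξ : X → ℂ) : H :=
  if h : MemV μ φ ξ then
    have key : ∀ g : H, Integrable (fun x => (starRingEnd ℂ) (ξ x) * ⟪φ x, g⟫) μ := by
      intro g
      have h2 : Integrable (fun x => (RCLike.conjLIE : ℂ ≃ₗᵢ[ℝ] ℂ) (ξ x * ⟪g, φ x⟫)) μ :=
        ((RCLike.conjLIE : ℂ ≃ₗᵢ[ℝ] ℂ).integrable_comp_iff).2 (h.2.1 g)
      simpa [RCLike.conjLIE_apply, map_mul] using h2
    (InnerProductSpace.toDual ℂ H).symm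
      (LinearMap.mkContinuousOfExistsBound
        { toFun := fun g => ∫ x, (starRingEnd ℂ) (ξ x) * ⟪φ x, g⟫ ∂μ
          map_add' := fun g g' => by
            simp only [inner_add_right, mul_add]
            exact integral_add (key g) (key g')
          map_smul' := fun c g => by
            simp only [inner_smul_right, RingHom.id_apply]
            calc ∫ x, (starRingEnd ℂ) (ξ x) * (c * ⟪φ x, g⟫) ∂μ
                = ∫ x, c * ((starRingEnd ℂ) (ξ x) * ⟪φ x, g⟫) ∂μ := by
                  simp only [mul_left_comm]
              _ = c * ∫ x, (starRingEnd ℂ) (ξ x) * ⟪φ x, g⟫ ∂μ := by rw [integral_const_mul] }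
        (by
          obtain ⟨c, hc⟩ := h.2.2
          refine ⟨c, fun g => ?_⟩
          have he : ∫ x, (starRingEnd ℂ) (ξ x) * ⟪φ x, g⟫ ∂μ
              = (starRingEnd ℂ) (∫ x, ξ x * ⟪g, φ x⟫ ∂μ) := by
            rw [← integral_conj]
            congr 1; funext x
            simp [map_mul]
          simp only [LinearMap.coe_mk, AddHom.coe_mk]
          rw [he, RCLike.norm_conj]
          exact hc g))
  else 0

/-- The norm `‖[ξ]_φ‖_φ = sup_{‖g‖ ≤ 1} |∫ ξ(x) ⟨φ(x), g⟩ dμ(x)|` (computed on a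
representative; it only depends on the class `[ξ]_φ = ξ + Ker T_φ`). -/
def Vnorm (μ : Measure X) (φ : X → H) (ξ : X → ℂ) : ℝ :=
  ⨆ g : {g : H // ‖g‖ ≤ 1}, ‖∫ x, ξ x * ⟪(g : H), φ x⟫ ∂μ‖

/-- The range of `T̂_φ : V_φ(X,μ) → H` (equivalently, of `T_φ` on `𝒱_φ(X,μ)`). -/
def Tran (μ : Measure X) (φ : X → H) : Set H := Tmap μ φ '' {ξ | MemV μ φ ξ}

/-- The analysis coefficient map: `(C_ψ f)(x) = ⟨f, ψ(x)⟩`. -/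
def Cpsi (ψ : X → H) (f : H) : X → ℂ := fun x => ⟪ψ x, f⟫

/-- `φ` is `μ`-total: `Ker C_φ = {0}`, i.e. if `∫ ξ(x) ⟨φ(x), f⟩ dμ(x) = 0` for every
`ξ ∈ 𝒱_φ(X,μ)`, then `f = 0`. -/
def MuTotal (μ : Measure X) (φ : X → H) : Prop :=
  ∀ f : H, (∀ ξ, MemV μ φ ξ → ∫ x, ξ x * ⟪f, φ x⟫ ∂μ = 0) → f = 0

/-- `S : H ≃L[ℂ] H` represents the sesquilinear form `Ω_{ψ,φ}`:
`⟨S f, g⟩ = ∫ ⟨f, ψ(x)⟩ ⟨φ(x), g⟩ dμ(x)` for all `f, g ∈ H`. -/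
def IsAnalysisOp (μ : Measure X) (ψ φ : X → H) (S : H ≃L[ℂ] H) : Prop :=
  ∀ f g : H, ⟪g, S f⟫ = ∫ x, ⟪ψ x, f⟫ * ⟪g, φ x⟫ ∂μ

/-- `(ψ, φ)` is a reproducing pair: both weakly measurable, the form
`Ω_{ψ,φ}(f,g) = ∫ ⟨f,ψ(x)⟩⟨φ(x),g⟩ dμ(x)` is well defined (integrable) and bounded, and the
associated bounded operator `S_{ψ,φ}` has a bounded everywhere-defined inverse. -/
def IsReproducingPair (μ : Measure X) (ψ φ : X → H) : Prop :=
  WeaklyMeasurable ψ ∧ WeaklyMeasurable φ ∧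
    (∀ f g : H, Integrable (fun x => ⟪ψ x, f⟫ * ⟪g, φ x⟫) μ) ∧
    ∃ S : H ≃L[ℂ] H, IsAnalysisOp μ ψ φ S

/-- Completeness of `V_φ(X,μ)` in the norm `‖·‖_φ`, phrased via representatives:
every `‖·‖_φ`-Cauchy sequence of elements of `𝒱_φ(X,μ)` converges in `‖·‖_φ`
to an element of `𝒱_φ(X,μ)`. -/
def VComplete (μ : Measure X) (φ : X → H) : Prop :=
  ∀ ξ : ℕ → X → ℂ, (∀ n, MemV μ φ (ξ n)) →
    (∀ ε : ℝ, 0 < ε → ∃ N, ∀ m ≥ N, ∀ n ≥ N, Vnorm μ φ (ξ m - ξ n) < ε) →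
    ∃ η, MemV μ φ η ∧ Tendsto (fun n => Vnorm μ φ (ξ n - η)) atTop (𝓝 0)

/-- `F` is (induced by) a bounded linear functional on `V_φ(X,μ)`: it is linear on `𝒱_φ(X,μ)`,
constant on the classes of `V_φ(X,μ) = 𝒱_φ(X,μ)/Ker T_φ`, and bounded for `‖·‖_φ`. -/
def IsBddLinearFunctional (μ : Measure X) (φ : X → H) (F : (X → ℂ) → ℂ) : Prop :=
  (∀ ξ η, MemV μ φ ξ → MemV μ φ η → F (ξ + η) = F ξ + F η) ∧
  (∀ (c : ℂ) ξ, MemV μ φ ξ → F (c • ξ) = c * F ξ) ∧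
  (∀ ξ η, MemV μ φ ξ → MemV μ φ η → Tmap μ φ (ξ - η) = 0 → F ξ = F η) ∧
  ∃ c : ℝ, ∀ ξ, MemV μ φ ξ → ‖F ξ‖ ≤ c * Vnorm μ φ ξ

/-- The dual norm `‖F‖_{φ*} = sup_{‖[ξ]_φ‖_φ ≤ 1} |F([ξ]_φ)|`. -/
def DualNorm (μ : Measure X) (φ : X → H) (F : (X → ℂ) → ℂ) : ℝ :=
  ⨆ ξ : {ξ : X → ℂ // MemV μ φ ξ ∧ Vnorm μ φ ξ ≤ 1}, ‖F ξ.1‖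

/-- `V_φ(X,μ)` and `V_ψ(X,μ)` are conjugate dual to each other with respect to the pairing
`⟨⟨ξ, η⟩⟩ = ∫ ξ(x) conj(η(x)) dμ(x)`: the pairing is well defined, each class `[η]_ψ` gives a
bounded linear functional on `V_φ(X,μ)`, and `[η]_ψ ↦ ⟨⟨·, η⟩⟩` is a bijection from `V_ψ(X,μ)`
onto the dual of `V_φ(X,μ)`. -/
def ConjDual (μ : Measure X) (φ ψ : X → H) : Prop :=
  (∀ ξ η, MemV μ φ ξ → MemV μ ψ η →
      Integrable (fun x => ξ x * (starRingEnd ℂ) (η x)) μ) ∧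
  (∀ η, MemV μ ψ η →
      IsBddLinearFunctional μ φ (fun ξ => ∫ x, ξ x * (starRingEnd ℂ) (η x) ∂μ)) ∧
  (∀ η η', MemV μ ψ η → MemV μ ψ η' →
      (∀ ξ, MemV μ φ ξ →
        ∫ x, ξ x * (starRingEnd ℂ) (η x) ∂μ = ∫ x, ξ x * (starRingEnd ℂ) (η' x) ∂μ) →
      Tmap μ ψ (η - η') = 0) ∧
  (∀ F, IsBddLinearFunctional μ φ F →
      ∃ η, MemV μ ψ η ∧ ∀ ξ, MemV μ φ ξ → F ξ = ∫ x, ξ x * (starRingEnd ℂ) (η x) ∂μ)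

theorem MemV.integrable_conj {μ : Measure X} {φ : X → H} {ξ : X → ℂ} (hξ : MemV μ φ ξ)
    (g : H) : Integrable (fun x => (starRingEnd ℂ) (ξ x) * ⟪φ x, g⟫) μ := by
  have h2 : Integrable (fun x => (RCLike.conjLIE : ℂ ≃ₗᵢ[ℝ] ℂ) (ξ x * ⟪g, φ x⟫)) μ :=
    ((RCLike.conjLIE : ℂ ≃ₗᵢ[ℝ] ℂ).integrable_comp_iff).2 (hξ.2.1 g)
  simpa [RCLike.conjLIE_apply, map_mul] using h2

theorem Tmap_inner {μ : Measure X} {φ : X → H} {ξ : X → ℂ} (hξ : MemV μ φ ξ) (g : H) :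
    ⟪Tmap μ φ ξ, g⟫ = ∫ x, (starRingEnd ℂ) (ξ x) * ⟪φ x, g⟫ ∂μ := by
  rw [Tmap, dif_pos hξ, InnerProductSpace.toDual_symm_apply]
  rfl

theorem inner_Tmap {μ : Measure X} {φ : X → H} {ξ : X → ℂ} (hξ : MemV μ φ ξ) (g : H) :
    ⟪g, Tmap μ φ ξ⟫ = ∫ x, ξ x * ⟪g, φ x⟫ ∂μ := by
  rw [← inner_conj_symm, Tmap_inner hξ g, ← integral_conj]
  congr 1; funext x
  simp [map_mul]

theorem MemV.sub' {μ : Measure X} {φ : X → H} {ξ ζ : X → ℂ} (hξ : MemV μ φ ξ)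
    (hζ : MemV μ φ ζ) : MemV μ φ (ξ - ζ) := by
  refine ⟨hξ.1.sub hζ.1, fun g => ?_, ?_⟩
  · simpa [Pi.sub_apply, sub_mul, Pi.sub_def] using (hξ.2.1 g).sub (hζ.2.1 g)
  · obtain ⟨c1, h1⟩ := hξ.2.2
    obtain ⟨c2, h2⟩ := hζ.2.2
    refine ⟨c1 + c2, fun g => ?_⟩
    have hsplit : ∫ x, (ξ - ζ) x * ⟪g, φ x⟫ ∂μ
        = (∫ x, ξ x * ⟪g, φ x⟫ ∂μ) - ∫ x, ζ x * ⟪g, φ x⟫ ∂μ := by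
      rw [← integral_sub (hξ.2.1 g) (hζ.2.1 g)]
      congr 1; funext x; simp [sub_mul]
    rw [hsplit, add_mul]
    exact (norm_sub_le _ _).trans (add_le_add (h1 g) (h2 g))

/-- Let `(ψ,φ)` be a reproducing pair. Then every bounded linear functional
`F` on `V_φ(X,μ)` can be represented as `F([ξ]_φ) = ∫ ξ(x) conj(η(x)) dμ(x)` with some
`η ∈ 𝒱_ψ(X,μ)`, and the residue class `[η]_ψ ∈ V_ψ(X,μ)` is uniquely determined. -/
theorem statement7 (μ : Measure X) [μ.Regular] (ψ φ : X → H)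
    (h : IsReproducingPair μ ψ φ) (F : (X → ℂ) → ℂ)
    (hF : IsBddLinearFunctional μ φ F) :
    ∃ η, MemV μ ψ η ∧
      (∀ ξ, MemV μ φ ξ → Integrable (fun x => ξ x * (starRingEnd ℂ) (η x)) μ ∧
        F ξ = ∫ x, ξ x * (starRingEnd ℂ) (η x) ∂μ) ∧
      ∀ η', MemV μ ψ η' →
        (∀ ξ, MemV μ φ ξ → F ξ = ∫ x, ξ x * (starRingEnd ℂ) (η' x) ∂μ) →
        Tmap μ ψ (η' - η) = 0 := by
  obtain ⟨hψm, hφm, hint, S, hS⟩ := h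
  obtain ⟨hadd, hsmul, hker, c0, hc0⟩ := hF
  haveI : Nonempty {g : H // ‖g‖ ≤ 1} := ⟨⟨0, by simp⟩⟩
  -- the coefficient functions `C_ψ f` belong to `𝒱_φ` and `T_φ (C_ψ f) = S f`
  have hCψ : ∀ f : H, MemV μ φ (fun x => ⟪ψ x, f⟫) := by
    intro f
    refine ⟨hψm f, fun g => hint f g, ⟨‖S f‖, fun g => ?_⟩⟩
    rw [← hS f g]
    exact (norm_inner_le_norm _ _).trans (le_of_eq (mul_comm _ _))
  have hTCψ : ∀ f : H, Tmap μ φ (fun x => ⟪ψ x, f⟫) = S f := by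
    intro f
    refine ext_inner_right ℂ fun g => ?_
    rw [Tmap_inner (hCψ f) g, ← inner_conj_symm (S f) g, hS f g, ← integral_conj]
    congr 1; funext x
    simp [map_mul]
  have hVnorm_le : ∀ f : H, Vnorm μ φ (fun x => ⟪ψ x, f⟫) ≤ ‖S f‖ := by
    intro f
    refine ciSup_le fun g => ?_
    rw [← hS f g]
    calc ‖⟪(g : H), S f⟫‖ ≤ ‖(g : H)‖ * ‖S f‖ := norm_inner_le_norm _ _
      _ ≤ 1 * ‖S f‖ := by
          exact mul_le_mul_of_nonneg_right g.2 (norm_nonneg _)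
      _ = ‖S f‖ := one_mul _
  have hVnn : ∀ ξ : X → ℂ, 0 ≤ Vnorm μ φ ξ := fun ξ =>
    Real.iSup_nonneg fun g => norm_nonneg _
  have hc' : ∀ ξ, MemV μ φ ξ → ‖F ξ‖ ≤ max c0 0 * Vnorm μ φ ξ := fun ξ hξ =>
    (hc0 ξ hξ).trans (mul_le_mul_of_nonneg_right (le_max_left _ _) (hVnn ξ))
  -- the bounded linear functional `f ↦ F (C_ψ (S⁻¹ f))` on `H`, and its Riesz vector `h0`
  have hriesz : ∃ h0 : H, ∀ f : H, ⟪h0, f⟫ = F (fun x => ⟪ψ x, S.symm f⟫) := by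
    refine ⟨(InnerProductSpace.toDual ℂ H).symm (LinearMap.mkContinuousOfExistsBound
    { toFun := fun f => F (fun x => ⟪ψ x, S.symm f⟫)
      map_add' := fun f f' => by
        have he : (fun x => ⟪ψ x, S.symm (f + f')⟫)
            = (fun x => ⟪ψ x, S.symm f⟫) + fun x => ⟪ψ x, S.symm f'⟫ := by
          funext x; simp [map_add, inner_add_right]
        beta_reduce
        rw [he]; exact hadd _ _ (hCψ _) (hCψ _)
      map_smul' := fun a f => by
        have he : (fun x => ⟪ψ x, S.symm (a • f)⟫)
            = a • fun x => ⟪ψ x, S.symm f⟫ := by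
          funext x; simp [_root_.map_smul, inner_smul_right]
        show F (fun x => ⟪ψ x, S.symm (a • f)⟫) = a • F (fun x => ⟪ψ x, S.symm f⟫)
        rw [he, hsmul a _ (hCψ _), smul_eq_mul] }
      ⟨max c0 0, fun f => by
        simp only [LinearMap.coe_mk, AddHom.coe_mk]
        refine (hc' _ (hCψ _)).trans (mul_le_mul_of_nonneg_left ?_ (le_max_right _ _))
        refine (hVnorm_le _).trans ?_
        simp⟩), fun f => ?_⟩
    rw [InnerProductSpace.toDual_symm_apply]; rfl
  obtain ⟨h0, hG⟩ := hriesz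
  set η : X → ℂ := fun x => ⟪φ x, h0⟫ with hηdef
  -- `η ∈ 𝒱_ψ`
  have hηV : MemV μ ψ η := by
    refine ⟨hφm h0, fun g => ?_, ⟨‖(S : H →L[ℂ] H)‖ * ‖h0‖, fun g => ?_⟩⟩
    · have h2 : Integrable (fun x => (RCLike.conjLIE : ℂ ≃ₗᵢ[ℝ] ℂ)
          (⟪ψ x, g⟫ * ⟪h0, φ x⟫)) μ :=
        ((RCLike.conjLIE : ℂ ≃ₗᵢ[ℝ] ℂ).integrable_comp_iff).2 (hint g h0)
      simpa [RCLike.conjLIE_apply, map_mul, mul_comm] using h2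
    · have key : ∫ x, η x * ⟪g, ψ x⟫ ∂μ = ⟪S g, h0⟫ := by
        rw [← inner_conj_symm (S g) h0, hS g h0, ← integral_conj]
        congr 1; funext x
        simp [hηdef, map_mul, mul_comm]
      rw [key]
      calc ‖⟪S g, h0⟫‖ ≤ ‖S g‖ * ‖h0‖ := norm_inner_le_norm _ _
        _ ≤ (‖(S : H →L[ℂ] H)‖ * ‖g‖) * ‖h0‖ :=
            mul_le_mul_of_nonneg_right ((S : H →L[ℂ] H).le_opNorm g) (norm_nonneg _)
        _ = ‖(S : H →L[ℂ] H)‖ * ‖h0‖ * ‖g‖ := by ring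
  -- the representation `F ξ = ∫ ξ conj η`
  have hrep0 : ∀ ξ, MemV μ φ ξ → F ξ = ∫ x, ξ x * (starRingEnd ℂ) (η x) ∂μ := by
    intro ξ hξ
    have hρ : MemV μ φ (fun x => ⟪ψ x, S.symm (Tmap μ φ ξ)⟫) := hCψ _
    have hTρ : Tmap μ φ (fun x => ⟪ψ x, S.symm (Tmap μ φ ξ)⟫) = Tmap μ φ ξ := by
      rw [hTCψ, ContinuousLinearEquiv.apply_symm_apply]
    have hδ : MemV μ φ (ξ - fun x => ⟪ψ x, S.symm (Tmap μ φ ξ)⟫) := hξ.sub' hρ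
    have hT0 : Tmap μ φ (ξ - fun x => ⟪ψ x, S.symm (Tmap μ φ ξ)⟫) = 0 := by
      have hz : ∀ g : H, ⟪Tmap μ φ (ξ - fun x => ⟪ψ x, S.symm (Tmap μ φ ξ)⟫), g⟫ = 0 := by
        intro g
        rw [Tmap_inner hδ g]
        have hsplit : ∫ x, (starRingEnd ℂ)
              ((ξ - fun x => ⟪ψ x, S.symm (Tmap μ φ ξ)⟫) x) * ⟪φ x, g⟫ ∂μ
            = (∫ x, (starRingEnd ℂ) (ξ x) * ⟪φ x, g⟫ ∂μ)
              - ∫ x, (starRingEnd ℂ) (⟪ψ x, S.symm (Tmap μ φ ξ)⟫) * ⟪φ x, g⟫ ∂μ := by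
          rw [← integral_sub (hξ.integrable_conj g) (hρ.integrable_conj g)]
          congr 1; funext x; simp [map_sub, sub_mul]
        rw [hsplit, ← Tmap_inner hξ g, ← Tmap_inner hρ g, hTρ, sub_self]
      have h2 := hz (Tmap μ φ (ξ - fun x => ⟪ψ x, S.symm (Tmap μ φ ξ)⟫))
      rwa [inner_self_eq_zero] at h2
    have hFξ : F ξ = F (fun x => ⟪ψ x, S.symm (Tmap μ φ ξ)⟫) := hker _ _ hξ hρ hT0
    rw [hFξ, ← hG (Tmap μ φ ξ), inner_Tmap hξ h0]
    congr 1; funext x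
    simp [hηdef]
  refine ⟨η, hηV, fun ξ hξ => ⟨?_, hrep0 ξ hξ⟩, ?_⟩
  · -- integrability of `ξ · conj η`
    have := hξ.2.1 h0
    simpa [hηdef] using this
  · -- uniqueness of the class of `η`
    intro η' hη' hrep'
    have hδ : MemV μ ψ (η' - η) := hη'.sub' hηV
    have key : ∀ g : H, ⟪g, Tmap μ ψ (η' - η)⟫ = 0 := by
      intro g
      rw [inner_Tmap hδ g]
      have hsplit : ∫ x, (η' - η) x * ⟪g, ψ x⟫ ∂μ
          = (∫ x, η' x * ⟪g, ψ x⟫ ∂μ) - ∫ x, η x * ⟪g, ψ x⟫ ∂μ := by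
        rw [← integral_sub (hη'.2.1 g) (hηV.2.1 g)]
        congr 1; funext x; simp [sub_mul]
      have e3 : ∫ x, ⟪ψ x, g⟫ * (starRingEnd ℂ) (η' x) ∂μ
          = ∫ x, ⟪ψ x, g⟫ * (starRingEnd ℂ) (η x) ∂μ := by
        rw [← hrep' (fun x => ⟪ψ x, g⟫) (hCψ g), ← hrep0 (fun x => ⟪ψ x, g⟫) (hCψ g)]
      have e5 := congrArg (starRingEnd ℂ) e3
      rw [← integral_conj, ← integral_conj] at e5
      have e4 : ∫ x, η' x * ⟪g, ψ x⟫ ∂μ = ∫ x, η x * ⟪g, ψ x⟫ ∂μ := by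
        calc ∫ x, η' x * ⟪g, ψ x⟫ ∂μ
            = ∫ x, (starRingEnd ℂ) (⟪ψ x, g⟫ * (starRingEnd ℂ) (η' x)) ∂μ := by
              congr 1; funext x; simp [map_mul, mul_comm]
          _ = ∫ x, (starRingEnd ℂ) (⟪ψ x, g⟫ * (starRingEnd ℂ) (η x)) ∂μ := e5
          _ = ∫ x, η x * ⟪g, ψ x⟫ ∂μ := by
              congr 1; funext x; simp [map_mul, mul_comm]
      rw [hsplit, e4, sub_self]
    have h2 := key (Tmap μ ψ (η' - η))
    rwa [inner_self_eq_zero] at h2
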